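/- arXiv:2101.12197 — 3 statements merged into one kernel-verified Lean document; each statement's English description precedes it below -/
import Mathlib

section
/- Let (V, ω) be a finite-dimensional symplectic vector space over ℝ, let G be a group of linear automorphisms of V, and let N ≤ G be a finite-index subgroup acting on a nonzero subspace W ⊆ V with N·W ⊆ W. Suppose v ∈ V is such that the transvection T(v) : x ↦ x + ω(x, v)·v belongs to G, and suppose there exists w ∈ W with ω(v, w) ≠ 0. Then v ∈ W. -/
/-- If a finite-index subgroup `N` of `G ≤ GL(V)` preserves a nonzero subspace
`W`, the transvection `T(v)` lies in `G`, and some `w ∈ W` has `ω(v,w) ≠ 0`,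
then `v ∈ W`. -/
theorem transvection_vector_mem_invariant_subspace
    (V : Type*) [AddCommGroup V] [Module ℝ V] [FiniteDimensional ℝ V]
    (ω : LinearMap.BilinForm ℝ V) (hω : ω.IsAlt) (hnd : ω.Nondegenerate)
    (G N : Subgroup (V ≃ₗ[ℝ] V)) (hNG : N ≤ G) (hfi : N.relIndex G ≠ 0)
    (W : Submodule ℝ V) (hW : W ≠ ⊥)
    (hinv : ∀ g ∈ N, ∀ w ∈ W, g w ∈ W)
    (v : V) (T : V ≃ₗ[ℝ] V) (hTG : T ∈ G)
    (hT : ∀ x : V, T x = x + ω x v • v)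
    (w : V) (hwW : w ∈ W) (hvw : ω v w ≠ 0) :
    v ∈ W := by
  obtain ⟨n, hn0, -, hTn, -⟩ := Subgroup.exists_pow_mem_of_relIndex_ne_zero hfi hTG
  have key : ∀ m : ℕ, ∀ x : V, (T ^ m) x = x + (m : ℝ) • (ω x v • v) := by
    intro m
    induction m with
    | zero => intro x; simp
    | succ k ih =>
      intro x
      rw [LinearEquiv.pow_apply, Function.iterate_succ_apply, ← LinearEquiv.pow_apply, hT, ih]
      have h1 : ω (x + ω x v • v) v = ω x v := by simp [hω v]
      rw [h1]
      push_cast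
      module
  have hmem : (T ^ n) w ∈ W := hinv _ hTn w hwW
  rw [key n w] at hmem
  have h2 : (n : ℝ) • (ω w v • v) ∈ W := by
    have := W.sub_mem hmem hwW
    simpa using this
  have h3 : ω w v ≠ 0 := by
    intro h
    have := LinearMap.IsAlt.neg hω w v
    rw [h] at this
    exact hvw (by simpa using this.symm)
  have hns : (n : ℝ) * ω w v ≠ 0 :=
    mul_ne_zero (Nat.cast_ne_zero.mpr hn0.ne') h3
  have h4 : v = ((n : ℝ) * ω w v)⁻¹ • ((n : ℝ) • (ω w v • v)) := by
    rw [smul_smul, smul_smul, mul_assoc, inv_mul_cancel₀ hns, one_smul]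
  rw [h4]
  exact W.smul_mem _ h2
end

section
/- Let (V, ω) be a finite-dimensional real symplectic vector space and G ≤ GL(V) a group preserving ω. Let B ⊆ V be a finite set such that: (i) B spans V; (ii) for any u ≠ u' in B there exists a chain u = u₀, u₁, …, u_k = u' of elements of B with ω(u_j, u_{j+1}) ≠ 0 for all 0 ≤ j ≤ k−1; and (iii) the transvection T(u) : x ↦ x + ω(x, u)·u lies in G for every u ∈ B. Then the action of G on V is strongly irreducible: no finite-index subgroup of G preserves a nonzero proper subspace of V. -/
open scoped Classical in
/-- The strong irreducibility criterion: if a finite set `B` spans `V`, any two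
elements of `B` are connected by a chain of pairwise `ω`-non-orthogonal
elements of `B`, and every transvection along an element of `B` lies in `G`,
then no finite-index subgroup of `G` preserves a nonzero proper subspace. -/
theorem strongly_irreducible_of_transvections
    (V : Type*) [AddCommGroup V] [Module ℝ V] [FiniteDimensional ℝ V]
    (ω : LinearMap.BilinForm ℝ V) (hω : ω.IsAlt) (hnd : ω.Nondegenerate)
    (G : Subgroup (V ≃ₗ[ℝ] V))
    (hGω : ∀ g ∈ G, ∀ x y : V, ω (g x) (g y) = ω x y)
    (B : Finset V)
    (hspan : Submodule.span ℝ (B : Set V) = ⊤)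
    (hchain : ∀ u ∈ B, ∀ u' ∈ B, u ≠ u' →
      ∃ (k : ℕ) (c : ℕ → V), c 0 = u ∧ c k = u' ∧ (∀ j ≤ k, c j ∈ B) ∧
        ∀ j < k, ω (c j) (c (j + 1)) ≠ 0)
    (htrans : ∀ u ∈ B, ∃ T : V ≃ₗ[ℝ] V, T ∈ G ∧ ∀ x : V, T x = x + ω x u • u) :
    ∀ N : Subgroup (V ≃ₗ[ℝ] V), N ≤ G → N.relIndex G ≠ 0 →
      ∀ W : Submodule ℝ V, (∀ g ∈ N, ∀ w ∈ W, g w ∈ W) → W = ⊥ ∨ W = ⊤ := by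
  intro N hNG hfin W hW
  by_cases hbot : W = ⊥
  · exact Or.inl hbot
  right
  -- Key step: for every `u ∈ B` and `w ∈ W`, `ω w u • u ∈ W`.
  have key : ∀ u ∈ B, ∀ w ∈ W, ω w u • u ∈ W := by
    intro u hu w hw
    obtain ⟨T, hTG, hT⟩ := htrans u hu
    obtain ⟨n, hn0, -, hTn⟩ := Subgroup.exists_pow_mem_of_relIndex_ne_zero hfin hTG
    have hpow : ∀ m : ℕ, (T ^ m) w = w + ((m : ℝ) * ω w u) • u := by
      intro m
      induction m with
      | zero => simp
      | succ m ih =>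
        have : (T ^ (m + 1)) w = T ((T ^ m) w) := by
          rw [pow_succ']; rfl
        rw [this, ih, hT]
        have huu : ω u u = 0 := hω u
        have hval : ω (w + ((m : ℝ) * ω w u) • u) u = ω w u := by
          simp [huu]
        rw [hval, Nat.cast_succ]
        module
    have hmem : (T ^ n) w ∈ W := hW (T ^ n) hTn.1 w hw
    rw [hpow n] at hmem
    have h2 : ((n : ℝ) * ω w u) • u ∈ W := by
      have := W.sub_mem hmem hw
      simpa using this
    have h3 : ((n : ℝ)⁻¹ • (((n : ℝ) * ω w u) • u)) ∈ W := W.smul_mem _ h2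
    have hne : (n : ℝ) ≠ 0 := Nat.cast_ne_zero.mpr hn0.ne'
    rwa [smul_smul, inv_mul_cancel_left₀ hne] at h3
  -- Find some `u ∈ B` with `u ∈ W`.
  obtain ⟨w, hwW, hwne⟩ := Submodule.exists_mem_ne_zero_of_ne_bot hbot
  have hex : ∃ u ∈ B, ω w u ≠ 0 := by
    by_contra hc
    push_neg at hc
    apply hwne
    apply hnd.1 w
    intro y
    have hker : (Submodule.span ℝ (B : Set V)) ≤ LinearMap.ker (ω w) := by
      rw [Submodule.span_le]
      intro x hx
      exact LinearMap.mem_ker.mpr (hc x hx)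
    have : y ∈ LinearMap.ker (ω w) := hker (by rw [hspan]; trivial)
    exact LinearMap.mem_ker.mp this
  obtain ⟨u, huB, huω⟩ := hex
  have step : ∀ v ∈ B, ∀ w ∈ W, ω w v ≠ 0 → v ∈ W := by
    intro v hv w' hw' hne
    have := key v hv w' hw'
    have h3 : ((ω w' v)⁻¹ • ((ω w' v) • v)) ∈ W := W.smul_mem _ this
    rwa [smul_smul, inv_mul_cancel₀ hne, one_smul] at h3
  have huW : u ∈ W := step u huB w hwW huω
  -- Every element of `B` lies in `W` via chains.
  have hBW : ∀ u' ∈ B, u' ∈ W := by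
    intro u' hu'
    by_cases heq : u = u'
    · exact heq ▸ huW
    obtain ⟨k, c, hc0, hck, hcB, hcω⟩ := hchain u huB u' hu' heq
    have hall : ∀ j ≤ k, c j ∈ W := by
      intro j
      induction j with
      | zero => intro _; rw [hc0]; exact huW
      | succ j ih =>
        intro hjk
        have hj : j < k := Nat.lt_of_succ_le hjk
        exact step (c (j + 1)) (hcB _ hjk) (c j) (ih hj.le) (hcω j hj)
    rw [← hck]
    exact hall k le_rfl
  rw [eq_top_iff, ← hspan, Submodule.span_le]
  exact fun x hx => hBW x hx
end

section
/- The polynomial P(t) = t⁴ + 10t³ + 22t² + 10t + 1 has four distinct real roots, all of distinct absolute values, and is irreducible over ℚ. -/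
open Polynomial Real

/- ### Auxiliary algebraic identities -/

private lemma quad_factor (s p x y : ℝ) (hsum : x + y = s) (hprod : x * y = p) :
    (X - C x) * (X - C y) = X ^ 2 - C s * X + C p := by
  rw [← hsum, ← hprod, C_add, C_mul]; ring

private lemma quartic_factor (s t : ℝ) (h1 : s + t = -10) (h2 : s * t + 2 = 22) :
    (X ^ 2 - C s * X + C 1) * (X ^ 2 - C t * X + C 1)
      = X ^ 4 + 10 * X ^ 3 + 22 * X ^ 2 + 10 * X + 1 := by
  have e1 : (C s : ℝ[X]) + C t = C (-10) := by rw [← C_add, h1]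
  have e2 : (C s : ℝ[X]) * C t = C 20 := by rw [← C_mul]; congr 1; linarith
  have e3 : (X ^ 2 - C s * X + C 1) * (X ^ 2 - C t * X + C 1)
      = X ^ 4 - (C s + C t) * X ^ 3 + (C s * C t + 2 * C 1) * X ^ 2
        - (C s + C t) * C 1 * X + C 1 * C 1 := by ring
  rw [e3, e1, e2]
  have c10 : (C (-10) : ℝ[X]) = -10 := by rw [map_neg, map_ofNat]
  have c20 : (C 20 : ℝ[X]) = 20 := map_ofNat _ 20
  rw [c10, c20, C_1]
  ring

/- ### The four real roots -/

private noncomputable def aa : ℝ := Real.sqrt 5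
private noncomputable def bb : ℝ := Real.sqrt (26 - 10 * aa)
private noncomputable def cc : ℝ := Real.sqrt (26 + 10 * aa)

private lemma ha2 : aa ^ 2 = 5 := Real.sq_sqrt (by norm_num)
private lemma ha_bounds : 2.23 < aa ∧ aa < 2.24 := by
  have h0 : 0 ≤ aa := Real.sqrt_nonneg _
  have := ha2
  constructor <;> nlinarith
private lemma hb2 : bb ^ 2 = 26 - 10 * aa := Real.sq_sqrt (by nlinarith [ha_bounds.2])
private lemma hc2 : cc ^ 2 = 26 + 10 * aa := Real.sq_sqrt (by nlinarith [ha_bounds.1])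
private lemma hb_bounds : 1.89 < bb ∧ bb < 1.93 := by
  have h0 : 0 ≤ bb := Real.sqrt_nonneg _
  have := hb2; have := ha_bounds
  constructor <;> nlinarith [this.1, this.2]
private lemma hc_bounds : 6.9 < cc ∧ cc < 7.0 := by
  have h0 : 0 ≤ cc := Real.sqrt_nonneg _
  have := hc2; have := ha_bounds
  constructor <;> nlinarith [this.1, this.2]

private noncomputable def rts : Fin 4 → ℝ :=
  ![(-5 + aa + bb) / 2, (-5 + aa - bb) / 2, (-5 - aa + cc) / 2, (-5 - aa - cc) / 2]

private lemma real_factorization :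
    Polynomial.map (algebraMap ℚ ℝ)
        (X ^ 4 + 10 * X ^ 3 + 22 * X ^ 2 + 10 * X + 1 : ℚ[X]) =
      ∏ i : Fin 4, (X - C (rts i)) := by
  have hmap : Polynomial.map (algebraMap ℚ ℝ)
      (X ^ 4 + 10 * X ^ 3 + 22 * X ^ 2 + 10 * X + 1 : ℚ[X])
      = X ^ 4 + 10 * X ^ 3 + 22 * X ^ 2 + 10 * X + 1 := by
    simp [Polynomial.map_add, Polynomial.map_mul, Polynomial.map_pow, Polynomial.map_ofNat]
  rw [hmap, Fin.prod_univ_four,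
      show rts 0 = (-5 + aa + bb) / 2 from rfl, show rts 1 = (-5 + aa - bb) / 2 from rfl,
      show rts 2 = (-5 - aa + cc) / 2 from rfl, show rts 3 = (-5 - aa - cc) / 2 from rfl,
      mul_assoc]
  rw [quad_factor (aa - 5) 1 _ _ (by ring) (by linear_combination ha2 / 4 - hb2 / 4),
      quad_factor (-aa - 5) 1 _ _ (by ring) (by linear_combination ha2 / 4 - hc2 / 4),
      quartic_factor _ _ (by ring) (by linear_combination -ha2)]

set_option maxHeartbeats 1000000 in
private lemma rts_inj : Function.Injective fun i => |rts i| := by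
  obtain ⟨ha1, ha2⟩ := ha_bounds
  obtain ⟨hb1, hb2⟩ := hb_bounds
  obtain ⟨hc1, hc2⟩ := hc_bounds
  intro i j hij
  fin_cases i <;> fin_cases j <;>
    first
      | rfl
      | (exfalso; norm_num [rts] at hij;
         rw [abs_of_neg (by linarith), abs_of_neg (by linarith)] at hij; linarith)

/- ### Irrationality facts -/

private lemma no_lin {u : ℝ} (hu : Irrational u) {p q : ℚ} (h : (p : ℝ) + (q : ℝ) * u = 0) :
    p = 0 ∧ q = 0 := by
  rcases eq_or_ne q 0 with h0 | h0
  · subst h0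
    push_cast at h
    exact ⟨by exact_mod_cast (by linarith : (p:ℝ) = 0), rfl⟩
  · exfalso
    apply hu
    refine ⟨-p / q, ?_⟩
    have hq : (q : ℝ) ≠ 0 := by exact_mod_cast h0
    push_cast
    field_simp
    linarith

private lemma irr_a : Irrational aa := by
  have h5 : ((5:ℕ):ℝ) = (5:ℝ) := by norm_num
  simpa [aa, h5] using (Nat.prime_five.irrational_sqrt)

private lemma irr_bc : Irrational (bb * cc) := by
  have hb0 : (0:ℝ) ≤ 26 - 10 * aa := by nlinarith [ha_bounds.2]
  have hmul : bb * cc = Real.sqrt ((26 - 10 * aa) * (26 + 10 * aa)) :=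
    (Real.sqrt_mul hb0 _).symm
  have h176 : (26 - 10 * aa) * (26 + 10 * aa) = 176 := by linear_combination (-100 : ℝ) * ha2
  rw [hmul, h176, show (176:ℝ) = 4 ^ 2 * 11 by norm_num, Real.sqrt_mul (by positivity),
      Real.sqrt_sq (by norm_num)]
  have h11 : Irrational (Real.sqrt 11) := by
    have := Nat.Prime.irrational_sqrt (p := 11) (by norm_num)
    simpa using this
  have := h11.natCast_mul (m := 4) (by norm_num)
  simpa using this

private lemma irr00 : Irrational (-5 + aa + bb) := by
  rintro ⟨m, hm⟩
  have hb' : bb = (m : ℝ) + 5 - aa := by linarith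
  have hb2' := hb2
  rw [hb'] at hb2'
  have key : ((m ^ 2 + 10 * m + 4 : ℚ) : ℝ) + ((-(2 * m) : ℚ) : ℝ) * aa = 0 := by
    push_cast
    linear_combination hb2' - ha2
  obtain ⟨hp, hq⟩ := no_lin irr_a key
  have hm0 : m = 0 := by linarith
  rw [hm0] at hp
  norm_num at hp

private lemma irr11 : Irrational (-5 + aa - bb) := by
  rintro ⟨m, hm⟩
  have hb' : bb = aa - 5 - (m : ℝ) := by linarith
  have hb2' := hb2
  rw [hb'] at hb2'
  have key : ((m ^ 2 + 10 * m + 4 : ℚ) : ℝ) + ((-(2 * m) : ℚ) : ℝ) * aa = 0 := by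
    push_cast
    linear_combination hb2' - ha2
  obtain ⟨hp, hq⟩ := no_lin irr_a key
  have hm0 : m = 0 := by linarith
  rw [hm0] at hp
  norm_num at hp

private lemma irr22 : Irrational (-5 - aa + cc) := by
  rintro ⟨m, hm⟩
  have hc' : cc = (m : ℝ) + 5 + aa := by linarith
  have hc2' := hc2
  rw [hc'] at hc2'
  have key : ((m ^ 2 + 10 * m + 4 : ℚ) : ℝ) + ((2 * m : ℚ) : ℝ) * aa = 0 := by
    push_cast
    linear_combination hc2' - ha2
  obtain ⟨hp, hq⟩ := no_lin irr_a key
  have hm0 : m = 0 := by linarith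
  rw [hm0] at hp
  norm_num at hp

private lemma irr33 : Irrational (-5 - aa - cc) := by
  rintro ⟨m, hm⟩
  have hc' : cc = -((m : ℝ) + 5) - aa := by linarith
  have hc2' := hc2
  rw [hc'] at hc2'
  have key : ((m ^ 2 + 10 * m + 4 : ℚ) : ℝ) + ((2 * m : ℚ) : ℝ) * aa = 0 := by
    push_cast
    linear_combination hc2' - ha2
  obtain ⟨hp, hq⟩ := no_lin irr_a key
  have hm0 : m = 0 := by linarith
  rw [hm0] at hp
  norm_num at hp

private lemma irr01 : Irrational (-5 + aa) := by
  rintro ⟨m, hm⟩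
  exact irr_a ⟨m + 5, by push_cast; linarith⟩

private lemma irr23 : Irrational (-5 - aa) := by
  rintro ⟨m, hm⟩
  exact irr_a ⟨-(m + 5), by push_cast; linarith⟩

private lemma irr02 : Irrational ((-10 + bb + cc) / 2) := by
  rintro ⟨m, hm⟩
  have hs : bb + cc = 2 * (m : ℝ) + 10 := by linarith
  refine irr_bc ⟨(2 * m + 10) ^ 2 / 2 - 26, ?_⟩
  push_cast
  linear_combination (-(bb + cc + (2 * (m:ℝ) + 10)) / 2) * hs + hb2 / 2 + hc2 / 2

private lemma irr13 : Irrational ((-10 - bb - cc) / 2) := by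
  rintro ⟨m, hm⟩
  have hs : bb + cc = -(2 * (m : ℝ) + 10) := by linarith
  refine irr_bc ⟨(2 * m + 10) ^ 2 / 2 - 26, ?_⟩
  push_cast
  linear_combination (-(bb + cc - (2 * (m:ℝ) + 10)) / 2) * hs + hb2 / 2 + hc2 / 2

private lemma irr03 : Irrational ((-10 + bb - cc) / 2) := by
  rintro ⟨m, hm⟩
  have hs : bb - cc = 2 * (m : ℝ) + 10 := by linarith
  refine irr_bc ⟨26 - (2 * m + 10) ^ 2 / 2, ?_⟩
  push_cast
  linear_combination ((bb - cc + (2 * (m:ℝ) + 10)) / 2) * hs - hb2 / 2 - hc2 / 2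

private lemma irr12 : Irrational ((-10 - bb + cc) / 2) := by
  rintro ⟨m, hm⟩
  have hs : bb - cc = -(2 * (m : ℝ) + 10) := by linarith
  refine irr_bc ⟨26 - (2 * m + 10) ^ 2 / 2, ?_⟩
  push_cast
  linear_combination ((bb - cc - (2 * (m:ℝ) + 10)) / 2) * hs - hb2 / 2 - hc2 / 2

private lemma irr_congr {x : ℝ} (y : ℝ) (h : y = x) (hx : Irrational y) : Irrational x :=
  h ▸ hx

private lemma irr_sum : ∀ i j : Fin 4, Irrational (rts i + rts j) := by
  intro i j
  fin_cases i <;> fin_cases j <;> norm_num [rts]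
  · exact irr_congr _ (by ring) irr00
  · exact irr_congr _ (by ring) irr01
  · exact irr_congr _ (by ring) irr02
  · exact irr_congr _ (by ring) irr03
  · exact irr_congr _ (by ring) irr01
  · exact irr_congr _ (by ring) irr11
  · exact irr_congr _ (by ring) irr12
  · exact irr_congr _ (by ring) irr13
  · exact irr_congr _ (by ring) irr02
  · exact irr_congr _ (by ring) irr12
  · exact irr_congr _ (by ring) irr22
  · exact irr_congr _ (by ring) irr23
  · exact irr_congr _ (by ring) irr03
  · exact irr_congr _ (by ring) irr13
  · exact irr_congr _ (by ring) irr23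
  · exact irr_congr _ (by ring) irr33

/- ### Irreducibility over ℚ -/

private lemma irr_Q : Irreducible (X ^ 4 + 10 * X ^ 3 + 22 * X ^ 2 + 10 * X + 1 : ℚ[X]) := by
  set Q : ℚ[X] := X ^ 4 + 10 * X ^ 3 + 22 * X ^ 2 + 10 * X + 1 with hQdef
  have hQm : Q.Monic := by rw [hQdef]; monicity!
  have hQdeg : Q.natDegree = 4 := by rw [hQdef]; compute_degree!
  rw [hQm.irreducible_iff_natDegree']
  refine ⟨fun h => by simp [h] at hQdeg, ?_⟩
  intro f g hf hg hfg hdg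
  rw [hQdeg] at hdg
  simp only [Finset.mem_Ioc] at hdg
  have hPmap : Polynomial.map (algebraMap ℚ ℝ) Q = ∏ i, (X - C (rts i)) :=
    real_factorization
  have hprod_ne : (∏ i : Fin 4, (X - C (rts i))) ≠ 0 := by
    apply Finset.prod_ne_zero_iff.mpr
    intro i _
    exact X_sub_C_ne_zero _
  have hdvd : (g.map (algebraMap ℚ ℝ)) ∣ ∏ i : Fin 4, (X - C (rts i)) := by
    rw [← hPmap, ← hfg, Polynomial.map_mul]
    exact dvd_mul_left _ _
  have hsplits : (g.map (algebraMap ℚ ℝ)).Splits :=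
    Splits.of_dvd (Splits.prod fun i _ => Splits.X_sub_C _) hprod_ne hdvd
  have hgm : (g.map (algebraMap ℚ ℝ)).Monic := hg.map _
  have hroot_mem : ∀ x : ℝ, (g.map (algebraMap ℚ ℝ)).IsRoot x → ∃ i, x = rts i := by
    intro x hx
    have h2 : (∏ i : Fin 4, (X - C (rts i))).IsRoot x := hx.dvd hdvd
    simpa [Polynomial.IsRoot, eval_prod, Finset.prod_eq_zero_iff, sub_eq_zero] using h2
  obtain h1 | h2 : g.natDegree = 1 ∨ g.natDegree = 2 := by omega
  · -- degree 1
    have hgeq : g = X + C (g.coeff 0) := hg.eq_X_add_C h1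
    have hroot : (g.map (algebraMap ℚ ℝ)).IsRoot (-(algebraMap ℚ ℝ (g.coeff 0))) := by
      rw [hgeq]
      simp [Polynomial.IsRoot]
    obtain ⟨i, hi⟩ := hroot_mem _ hroot
    refine irr_sum i i ⟨-(2 * g.coeff 0), ?_⟩
    rw [← hi, eq_ratCast (algebraMap ℚ ℝ)]
    push_cast
    ring
  · -- degree 2
    have hcard : (g.map (algebraMap ℚ ℝ)).roots.card = 2 := by
      have hcr := (splits_iff_card_roots (f := g.map (algebraMap ℚ ℝ))).mp hsplits
      rwa [natDegree_map, h2] at hcr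
    obtain ⟨x, y, hxy⟩ := Multiset.card_eq_two.mp hcard
    have hgeq : g.map (algebraMap ℚ ℝ) = (X - C x) * (X - C y) := by
      have := hsplits.eq_prod_roots_of_monic hgm
      rw [hxy] at this
      simpa using this
    have hx : ∃ i, x = rts i := by
      apply hroot_mem
      rw [hgeq]
      simp [Polynomial.IsRoot]
    have hy : ∃ j, y = rts j := by
      apply hroot_mem
      rw [hgeq]
      simp [Polynomial.IsRoot]
    obtain ⟨i, hi⟩ := hx
    obtain ⟨j, hj⟩ := hy
    have hcoeff := congrArg (fun p => coeff p 1) hgeq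
    simp only [coeff_map] at hcoeff
    have hrhs : ((X - C x) * (X - C y)).coeff 1 = -(x + y) := by
      have hexp : (X - C x) * (X - C y) = X ^ 2 - (C x + C y) * X + C x * C y := by ring
      rw [hexp]
      simp
    rw [hrhs] at hcoeff
    refine irr_sum i j ⟨-(g.coeff 1), ?_⟩
    rw [← hi, ← hj]
    rw [eq_ratCast (algebraMap ℚ ℝ)] at hcoeff
    push_cast
    linarith [hcoeff]

open Polynomial in
/-- `t⁴ + 10t³ + 22t² + 10t + 1` has four real roots with pairwise distinct
absolute values, and is irreducible over `ℚ`. -/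
theorem galois_pinching_poly_Q5m1 :
    (∃ r : Fin 4 → ℝ, (Function.Injective fun i => |r i|) ∧
        Polynomial.map (algebraMap ℚ ℝ)
            (X ^ 4 + 10 * X ^ 3 + 22 * X ^ 2 + 10 * X + 1 : ℚ[X]) =
          ∏ i : Fin 4, (X - C (r i))) ∧
      Irreducible (X ^ 4 + 10 * X ^ 3 + 22 * X ^ 2 + 10 * X + 1 : ℚ[X]) := by
  exact ⟨⟨rts, rts_inj, real_factorization⟩, irr_Q⟩
end
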